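/- For every k ∈ ℕ with k ≥ 1, every real x > 0, and every h ∈ ℂ with Re(h) > 1, the defining series of L_q^h(s, χ | x) converge at s = 1 − k and L_q^h(1−k, χ | x) = − β_{k,χ,q}^h(x) / k. -/

import Mathlib

open Complex Finset Filter

/-- Complex power `q^z := exp(z·log q)` for a real base `q`. -/
noncomputable def qcpow (q : ℝ) (z : ℂ) : ℂ := Complex.exp (z * (Real.log q : ℂ))

/-- The complex `q`-number `[z]_q = (1 - q^z)/(1 - q)`. -/
noncomputable def qnum (q : ℝ) (z : ℂ) : ℂ := (1 - qcpow q z) / (1 - (q : ℂ))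

/-- The real `q`-number `[y]_q = (1 - q^y)/(1 - q)` for real `y`. -/
noncomputable def qnumR (q : ℝ) (y : ℝ) : ℝ := (1 - Real.exp (y * Real.log q)) / (1 - q)

/-- The `(h,q)`-Bernoulli polynomial
`β_{n,q}^h(x) = (1-q)^{-n} ∑_{l=0}^{n} C(n,l) (-1)^l q^{lx} (l+h-1)/[l+h-1]_q`. -/
noncomputable def qbeta (q : ℝ) (h : ℂ) (n : ℕ) (x : ℝ) : ℂ :=
  (1 - (q : ℂ))⁻¹ ^ n * ∑ l ∈ Finset.range (n + 1),
    (n.choose l : ℂ) * (-1) ^ l * qcpow q ((l : ℂ) * (x : ℂ)) *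
      (((l : ℂ) + h - 1) / qnum q ((l : ℂ) + h - 1))

/-- The generalized `(h,q)`-Bernoulli polynomial attached to a Dirichlet character `χ` mod `f`:
`β_{n,χ,q}^h(x) = [f]_q^{n-1} ∑_{a=0}^{f-1} χ(a) q^{(h-1)a} β_{n,q^f}^h((x+a)/f)`. -/
noncomputable def qbetaChi (q : ℝ) (h : ℂ) (f : ℕ) (χ : DirichletCharacter ℂ f)
    (n : ℕ) (x : ℝ) : ℂ :=
  qnum q (f : ℂ) ^ ((n : ℤ) - 1) * ∑ a ∈ Finset.range f,
    χ (a : ZMod f) * qcpow q ((h - 1) * (a : ℂ)) * qbeta (q ^ f) h n ((x + a) / f)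

/-- The Hurwitz-type `(h,q)`-`L`-function
`L_q^h(s, χ | x) = ((h-1)(1-q)/(s-1)) ∑ q^{(h-1)m} χ(m)/[x+m]_q^{s-1}
  + ∑ q^{hm+x} χ(m)/[x+m]_q^s`. -/
noncomputable def hqLH (q : ℝ) (h s : ℂ) (f : ℕ) (χ : DirichletCharacter ℂ f) (x : ℝ) : ℂ :=
  ((h - 1) * (1 - (q : ℂ)) / (s - 1)) *
    (∑' m : ℕ, qcpow q ((h - 1) * (m : ℂ)) * χ (m : ZMod f) /
      Complex.exp ((s - 1) * (Real.log (qnumR q (x + m)) : ℂ))) +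
  ∑' m : ℕ, qcpow q (h * (m : ℂ) + (x : ℂ)) * χ (m : ZMod f) /
    Complex.exp (s * (Real.log (qnumR q (x + m)) : ℂ))

/-- The Dirichlet-type `(h,q)`-`L`-function
`L_q^h(s, χ) = ((h-1)(1-q)/(s-1)) ∑_{m≥1} q^{(h-1)m} χ(m)/[m]_q^{s-1}
  + ∑_{m≥1} q^{hm} χ(m)/[m]_q^s`. -/
noncomputable def hqL (q : ℝ) (h s : ℂ) (f : ℕ) (χ : DirichletCharacter ℂ f) : ℂ :=
  ((h - 1) * (1 - (q : ℂ)) / (s - 1)) *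
    (∑' m : ℕ, qcpow q ((h - 1) * ((m : ℂ) + 1)) * χ ((m + 1 : ℕ) : ZMod f) /
      Complex.exp ((s - 1) * (Real.log (qnumR q ((m : ℝ) + 1)) : ℂ))) +
  ∑' m : ℕ, qcpow q (h * ((m : ℂ) + 1)) * χ ((m + 1 : ℕ) : ZMod f) /
    Complex.exp (s * (Real.log (qnumR q ((m : ℝ) + 1)) : ℂ))


lemma qcpow_add (q : ℝ) (z w : ℂ) : qcpow q (z + w) = qcpow q z * qcpow q w := by
  simp [qcpow, add_mul, Complex.exp_add]

lemma qcpow_nat_mul (q : ℝ) (z : ℂ) (n : ℕ) : qcpow q ((n:ℂ) * z) = qcpow q z ^ n := by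
  rw [qcpow, qcpow, mul_assoc, Complex.exp_nat_mul]

lemma qcpow_mul_nat (q : ℝ) (z : ℂ) (n : ℕ) : qcpow q (z * (n:ℂ)) = qcpow q z ^ n := by
  rw [mul_comm, qcpow_nat_mul]

lemma norm_qcpow (q : ℝ) (z : ℂ) : ‖qcpow q z‖ = Real.exp (z.re * Real.log q) := by
  rw [qcpow, Complex.norm_exp]
  norm_num [Complex.mul_re]

lemma norm_qcpow_lt_one (q : ℝ) (hq0 : 0 < q) (hq1 : q < 1) (z : ℂ) (hz : 0 < z.re) :
    ‖qcpow q z‖ < 1 := by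
  rw [norm_qcpow]
  have : Real.log q < 0 := Real.log_neg hq0 hq1
  calc Real.exp (z.re * Real.log q) < Real.exp 0 := by
        apply Real.exp_lt_exp.2; exact mul_neg_of_pos_of_neg hz this
    _ = 1 := Real.exp_zero

lemma qcpow_ofReal (q : ℝ) (y : ℝ) : qcpow q (y : ℂ) = (Real.exp (y * Real.log q) : ℂ) := by
  rw [qcpow, ← Complex.ofReal_mul, Complex.ofReal_exp]

lemma qnumR_pos (q : ℝ) (hq0 : 0 < q) (hq1 : q < 1) (y : ℝ) (hy : 0 < y) : 0 < qnumR q y := by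
  have hl : Real.log q < 0 := Real.log_neg hq0 hq1
  have : Real.exp (y * Real.log q) < 1 := by
    rw [← Real.exp_zero]; exact Real.exp_lt_exp.2 (mul_neg_of_pos_of_neg hy hl)
  have h1 : 0 < 1 - q := by linarith
  exact div_pos (by linarith) h1

lemma qnumR_coe (q : ℝ) (hq1 : q < 1) (y : ℝ) :
    ((qnumR q y : ℝ) : ℂ) = (1 - qcpow q (y:ℂ)) * (1 - (q:ℂ))⁻¹ := by
  rw [qnumR, qcpow_ofReal]
  push_cast
  rw [div_eq_mul_inv]

/-- geometric series with periodic bounded coefficients -/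
lemma summable_char_geom (f : ℕ) (χ : DirichletCharacter ℂ f) (r : ℂ) (hr : ‖r‖ < 1) :
    Summable (fun m : ℕ => χ (m : ZMod f) * r ^ m) := by
  apply Summable.of_norm_bounded (g := fun m : ℕ => ‖r‖ ^ m)
    (summable_geometric_of_lt_one (norm_nonneg r) hr)
  intro m
  rw [norm_mul, norm_pow]
  exact mul_le_of_le_one_left (by positivity) (χ.norm_le_one _)

lemma tsum_char_geom (f : ℕ) (hf : 0 < f) (χ : DirichletCharacter ℂ f) (r : ℂ) (hr : ‖r‖ < 1) :
    ∑' m : ℕ, χ (m : ZMod f) * r ^ m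
      = (∑ a ∈ Finset.range f, χ (a : ZMod f) * r ^ a) / (1 - r ^ f) := by
  have hs := summable_char_geom f χ r hr
  have hrf : ‖r ^ f‖ < 1 := by
    rw [norm_pow]
    exact pow_lt_one₀ (norm_nonneg r) hr hf.ne'
  have hne : 1 - r ^ f ≠ 0 := by
    intro hc
    rw [sub_eq_zero] at hc
    rw [← hc] at hrf; simp at hrf
  have key := hs.sum_add_tsum_nat_add f
  have hper : ∀ m : ℕ, ((m + f : ℕ) : ZMod f) = (m : ZMod f) := by
    intro m; push_cast; simp
  have hshift : ∑' m : ℕ, χ ((m + f : ℕ) : ZMod f) * r ^ (m + f)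
      = (∑' m : ℕ, χ (m : ZMod f) * r ^ m) * r ^ f := by
    rw [← tsum_mul_right]
    congr 1; funext m
    rw [hper m, pow_add]; ring
  rw [hshift] at key
  rw [eq_div_iff hne]
  linear_combination -key

lemma seriesA (q : ℝ) (hq0 : 0 < q) (hq1 : q < 1) (f : ℕ) (hf : 0 < f)
    (χ : DirichletCharacter ℂ f) (w : ℂ) (hw : 0 < w.re) (n : ℕ) (x : ℝ) :
    Summable (fun m : ℕ => qcpow q (w * m) * χ (m : ZMod f) * ((qnumR q (x + m) : ℝ) : ℂ) ^ n) ∧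
    ∑' m : ℕ, qcpow q (w * m) * χ (m : ZMod f) * ((qnumR q (x + m) : ℝ) : ℂ) ^ n
      = (1 - (q:ℂ))⁻¹ ^ n * ∑ l ∈ range (n+1), (n.choose l : ℂ) * (-1)^l * qcpow q ((l:ℂ) * x) *
          ((∑ a ∈ range f, χ (a : ZMod f) * qcpow q ((l:ℂ) + w) ^ a) /
            (1 - qcpow q ((l:ℂ) + w) ^ f)) := by
  set t : ℕ → ℂ := fun m => qcpow q ((x:ℂ) + m) with ht
  have hpt : ∀ m : ℕ, qcpow q (w * m) * χ (m : ZMod f) * ((qnumR q (x + m) : ℝ) : ℂ) ^ n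
      = ∑ l ∈ range (n+1), ((1-(q:ℂ))⁻¹ ^ n * ((n.choose l : ℂ) * (-1)^l * qcpow q ((l:ℂ)*x)))
          * (χ (m : ZMod f) * qcpow q ((l:ℂ) + w) ^ m) := by
    intro m
    have h1 : ((qnumR q (x + m) : ℝ) : ℂ) = (1 - t m) * (1-(q:ℂ))⁻¹ := by
      rw [qnumR_coe q hq1, ht]
      norm_num
    rw [h1, mul_pow]
    have h2 : (1 - t m) ^ n = ∑ l ∈ range (n+1), (-(t m))^l * 1^(n-l) * (n.choose l : ℂ) := by
      rw [← add_pow]; ring_nf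
    rw [h2, Finset.sum_mul, Finset.mul_sum]
    apply Finset.sum_congr rfl
    intro l _
    have h3 : qcpow q (w * m) * (t m) ^ l = qcpow q ((l:ℂ)*x) * qcpow q ((l:ℂ) + w) ^ m := by
      rw [ht, ← qcpow_mul_nat q ((x:ℂ)+(m:ℂ)) l, ← qcpow_add,
        show w * (m:ℂ) + ((x:ℂ)+(m:ℂ))*(l:ℂ) = (l:ℂ)*(x:ℂ) + ((l:ℂ)+w)*(m:ℂ) by ring,
        qcpow_add, qcpow_mul_nat]
    rw [one_pow, neg_pow]
    linear_combination ((1-(q:ℂ))⁻¹^n * (n.choose l : ℂ) * (-1:ℂ)^l * χ (m : ZMod f)) * h3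
  have hRl : ∀ l : ℕ, ‖qcpow q ((l:ℂ) + w)‖ < 1 := by
    intro l
    apply norm_qcpow_lt_one q hq0 hq1
    simp only [Complex.add_re, Complex.natCast_re]
    positivity
  have hsumm : ∀ l ∈ range (n+1), Summable (fun m : ℕ =>
      ((1-(q:ℂ))⁻¹ ^ n * ((n.choose l : ℂ) * (-1)^l * qcpow q ((l:ℂ)*x)))
        * (χ (m : ZMod f) * qcpow q ((l:ℂ) + w) ^ m)) := by
    intro l _
    exact (summable_char_geom f χ _ (hRl l)).mul_left _
  constructor
  · exact (summable_sum hsumm).congr (fun m => (hpt m).symm)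
  · rw [tsum_congr hpt, Summable.tsum_finsetSum hsumm, Finset.mul_sum]
    apply Finset.sum_congr rfl
    intro l _
    rw [tsum_mul_left, tsum_char_geom f hf χ _ (hRl l)]
    ring

lemma qcpow_pow_base (q : ℝ) (hq0 : 0 < q) (f : ℕ) (z : ℂ) :
    qcpow (q ^ f) z = qcpow q ((f:ℂ) * z) := by
  rw [qcpow, qcpow, Real.log_pow]
  push_cast
  ring_nf

lemma qcpow_natCast (q : ℝ) (hq0 : 0 < q) (f : ℕ) :
    qcpow q ((f:ℕ):ℂ) = ((q ^ f : ℝ) : ℂ) := by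
  have : ((f:ℕ):ℂ) = ((f : ℝ) : ℂ) := by push_cast; rfl
  rw [this, qcpow_ofReal]
  congr 1
  rw [show (f:ℝ) * Real.log q = Real.log (q^f) by rw [Real.log_pow], Real.exp_log (by positivity)]

lemma beta_eval (q : ℝ) (hq0 : 0 < q) (hq1 : q < 1) (h : ℂ) (hh : 1 < h.re)
    (f : ℕ) (hf : 1 ≤ f) (χ : DirichletCharacter ℂ f) (k : ℕ) (hk : 1 ≤ k) (x : ℝ) :
    qbetaChi q h f χ k x = (1 - (q:ℂ))⁻¹ ^ (k-1) * ∑ l ∈ range (k+1),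
      (k.choose l : ℂ) * (-1)^l * qcpow q ((l:ℂ)*x) * (((l:ℂ)+h-1) *
        ((∑ a ∈ range f, χ (a:ZMod f) * qcpow q ((l:ℂ)+h-1) ^ a) /
          (1 - qcpow q ((l:ℂ)+h-1) ^ f))) := by
  have hfC : ((f:ℂ)) ≠ 0 := Nat.cast_ne_zero.mpr (by omega)
  have hRnorm : ∀ l : ℕ, ‖qcpow q ((l:ℂ)+h-1)‖ < 1 := by
    intro l
    apply norm_qcpow_lt_one q hq0 hq1
    simp only [Complex.sub_re, Complex.add_re, Complex.natCast_re, Complex.one_re]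
    have : (0:ℝ) ≤ (l:ℝ) := Nat.cast_nonneg l
    linarith
  have hRf_ne : ∀ l : ℕ, (1:ℂ) - qcpow q ((l:ℂ)+h-1) ^ f ≠ 0 := by
    intro l
    have : ‖qcpow q ((l:ℂ)+h-1) ^ f‖ < 1 := by
      rw [norm_pow]
      exact pow_lt_one₀ (norm_nonneg _) (hRnorm l) (by omega)
    intro hc
    rw [sub_eq_zero] at hc
    rw [← hc] at this; simp at this
  have hP1 : (q:ℝ)^f < 1 := pow_lt_one₀ hq0.le hq1 (by omega)
  have hPne : (1:ℂ) - ((q:ℂ))^f ≠ 0 := by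
    have h0 : ((1:ℝ) - q^f) ≠ 0 := by linarith
    exact_mod_cast h0
  have hqne : (1:ℂ) - (q:ℂ) ≠ 0 := by
    have h0 : ((1:ℝ) - q) ≠ 0 := by linarith
    exact_mod_cast h0
  -- qnum q f
  have hqnumf : qnum q ((f:ℕ):ℂ) = (1 - ((q:ℂ))^f) / (1 - (q:ℂ)) := by
    rw [qnum, qcpow_natCast q hq0]
    push_cast
    rfl
  -- rewrite each qbeta term
  have hterm : ∀ a ∈ range f, χ (a:ZMod f) * qcpow q ((h-1) * (a:ℂ)) * qbeta (q^f) h k ((x+a)/f)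
      = (1 - ((q:ℂ))^f)⁻¹ ^ k * ∑ l ∈ range (k+1),
          (k.choose l : ℂ) * (-1)^l * qcpow q ((l:ℂ)*x) *
            ((((l:ℂ)+h-1) * (1 - ((q:ℂ))^f) / (1 - qcpow q ((l:ℂ)+h-1) ^ f)) *
              (χ (a:ZMod f) * qcpow q ((l:ℂ)+h-1) ^ a)) := by
    intro a _
    rw [qbeta]
    have hcast : ((q^f : ℝ) : ℂ) = ((q:ℂ))^f := by push_cast; rfl
    rw [hcast]
    rw [show χ (a:ZMod f) * qcpow q ((h-1) * (a:ℂ)) *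
        ((1 - ((q:ℂ))^f)⁻¹ ^ k * ∑ l ∈ range (k+1), (k.choose l : ℂ) * (-1) ^ l *
          qcpow (q^f) ((l:ℂ) * (((x + a)/f : ℝ):ℂ)) * (((l:ℂ) + h - 1) / qnum (q^f) ((l:ℂ) + h - 1)))
      = (1 - ((q:ℂ))^f)⁻¹ ^ k * ((∑ l ∈ range (k+1), (k.choose l : ℂ) * (-1) ^ l *
          qcpow (q^f) ((l:ℂ) * (((x + a)/f : ℝ):ℂ)) * (((l:ℂ) + h - 1) / qnum (q^f) ((l:ℂ) + h - 1))) *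
            (χ (a:ZMod f) * qcpow q ((h-1) * (a:ℂ)))) from by ring,
      Finset.sum_mul]
    congr 1
    apply Finset.sum_congr rfl
    intro l _
    have e1 : qcpow (q^f) ((l:ℂ) * (((x + a)/f : ℝ) : ℂ))
        = qcpow q ((l:ℂ)*x) * qcpow q ((l:ℂ)*a) := by
      rw [qcpow_pow_base q hq0, ← qcpow_add]
      congr 1
      push_cast
      field_simp
    have e2 : qnum (q^f) ((l:ℂ)+h-1)
        = (1 - qcpow q ((l:ℂ)+h-1) ^ f) / (1 - ((q:ℂ))^f) := by
      rw [qnum, qcpow_pow_base q hq0, mul_comm ((f:ℕ):ℂ), qcpow_mul_nat, hcast]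
    have e3 : qcpow q ((h-1) * (a:ℂ)) * qcpow q ((l:ℂ)*a) = qcpow q ((l:ℂ)+h-1) ^ a := by
      rw [← qcpow_add,
        show (h-1) * (a:ℂ) + (l:ℂ)*(a:ℂ) = ((l:ℂ)+h-1) * (a:ℂ) by ring, qcpow_mul_nat]
    rw [e1, e2, div_div_eq_mul_div, ← e3]
    ring
  have hsum : ∑ a ∈ range f, χ (a:ZMod f) * qcpow q ((h-1) * (a:ℂ)) * qbeta (q^f) h k ((x+a)/f)
      = (1 - ((q:ℂ))^f)⁻¹ ^ k * ∑ l ∈ range (k+1), ∑ a ∈ range f,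
          (k.choose l : ℂ) * (-1)^l * qcpow q ((l:ℂ)*x) *
            ((((l:ℂ)+h-1) * (1 - ((q:ℂ))^f) / (1 - qcpow q ((l:ℂ)+h-1) ^ f)) *
              (χ (a:ZMod f) * qcpow q ((l:ℂ)+h-1) ^ a)) := by
    rw [Finset.sum_congr rfl hterm, ← Finset.mul_sum, Finset.sum_comm]
  have hcoef : qnum q ((f:ℕ):ℂ) ^ ((k:ℤ)-1) * ((1 - ((q:ℂ))^f)⁻¹ ^ k * (1 - ((q:ℂ))^f))
      = (1 - (q:ℂ))⁻¹ ^ (k-1) := by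
    have hz : (k:ℤ)-1 = ((k-1:ℕ):ℤ) := by omega
    rw [hqnumf, hz, zpow_natCast]
    have hkk : k = (k-1) + 1 := by omega
    rw [hkk, pow_succ]
    rw [Nat.add_sub_cancel, inv_mul_cancel_right₀ hPne, ← mul_pow, div_mul_eq_mul_div,
      mul_inv_cancel₀ hPne, one_div]
  rw [qbetaChi, hsum, ← mul_assoc, Finset.mul_sum, Finset.mul_sum]
  apply Finset.sum_congr rfl
  intro l _
  have hinner : ∑ a ∈ range f,
      (k.choose l : ℂ) * (-1)^l * qcpow q ((l:ℂ)*x) *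
        ((((l:ℂ)+h-1) * (1 - ((q:ℂ))^f) / (1 - qcpow q ((l:ℂ)+h-1) ^ f)) *
          (χ (a:ZMod f) * qcpow q ((l:ℂ)+h-1) ^ a))
      = ((k.choose l : ℂ) * (-1)^l * qcpow q ((l:ℂ)*x) *
          (((l:ℂ)+h-1) * (1 - ((q:ℂ))^f) / (1 - qcpow q ((l:ℂ)+h-1) ^ f)))
        * ∑ a ∈ range f, χ (a:ZMod f) * qcpow q ((l:ℂ)+h-1) ^ a := by
    rw [Finset.mul_sum]
    apply Finset.sum_congr rfl
    intro a _
    ring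
  rw [hinner]
  rw [div_eq_mul_inv, div_eq_mul_inv]
  linear_combination ((k.choose l : ℂ) * (-1)^l * qcpow q ((l:ℂ)*x) * (((l:ℂ)+h-1) *
    (1 - qcpow q ((l:ℂ)+h-1) ^ f)⁻¹ *
      (∑ a ∈ range f, χ (a:ZMod f) * qcpow q ((l:ℂ)+h-1) ^ a))) * hcoef

lemma expneg (n : ℕ) (u : ℝ) (hu : 0 < u) :
    Complex.exp (-(n:ℂ) * ((Real.log u : ℝ):ℂ)) = (((u:ℝ):ℂ) ^ n)⁻¹ := by
  rw [neg_mul, Complex.exp_neg, Complex.exp_nat_mul, ← Complex.ofReal_exp, Real.exp_log hu]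

set_option maxHeartbeats 2000000

/-- `L_q^h(1-k, χ | x) = -β_{k,χ,q}^h(x)/k` for `k ≥ 1`, with the
defining series converging at `s = 1-k`. -/
theorem hqLH_neg_nat (q : ℝ) (hq0 : 0 < q) (hq1 : q < 1)
    (h : ℂ) (hh : 1 < h.re) (f : ℕ) (hf : 1 ≤ f) (χ : DirichletCharacter ℂ f)
    (k : ℕ) (hk : 1 ≤ k) (x : ℝ) (hx : 0 < x) :
    Summable (fun m : ℕ => qcpow q ((h - 1) * (m : ℂ)) * χ (m : ZMod f) /
      Complex.exp (((1 - (k : ℂ)) - 1) * (Real.log (qnumR q (x + m)) : ℂ))) ∧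
    Summable (fun m : ℕ => qcpow q (h * (m : ℂ) + (x : ℂ)) * χ (m : ZMod f) /
      Complex.exp ((1 - (k : ℂ)) * (Real.log (qnumR q (x + m)) : ℂ))) ∧
    hqLH q h (1 - (k : ℂ)) f χ x = -qbetaChi q h f χ k x / (k : ℂ) := by
  have hqne : (1:ℂ) - (q:ℂ) ≠ 0 := by
    have h0 : ((1:ℝ) - q) ≠ 0 := by linarith
    exact_mod_cast h0
  have hk0 : (k:ℂ) ≠ 0 := Nat.cast_ne_zero.mpr (by omega)
  have hu : ∀ m : ℕ, 0 < qnumR q (x + m) := fun m =>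
    qnumR_pos q hq0 hq1 _ (by positivity)
  have hpt1 : ∀ m : ℕ, qcpow q ((h - 1) * (m : ℂ)) * χ (m : ZMod f) /
      Complex.exp (((1 - (k : ℂ)) - 1) * (Real.log (qnumR q (x + m)) : ℂ))
      = qcpow q ((h-1) * (m:ℂ)) * χ (m : ZMod f) * ((qnumR q (x + m) : ℝ) : ℂ) ^ k := by
    intro m
    rw [show ((1:ℂ) - (k:ℂ)) - 1 = -(k:ℂ) by ring, expneg k _ (hu m), div_eq_mul_inv, inv_inv]
  have hpt2 : ∀ m : ℕ, qcpow q (h * (m : ℂ) + (x : ℂ)) * χ (m : ZMod f) /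
      Complex.exp ((1 - (k : ℂ)) * (Real.log (qnumR q (x + m)) : ℂ))
      = qcpow q ((x:ℝ):ℂ) *
          (qcpow q (h * (m:ℂ)) * χ (m : ZMod f) * ((qnumR q (x + m) : ℝ) : ℂ) ^ (k-1)) := by
    intro m
    rw [show (1:ℂ) - (k:ℂ) = -(((k-1:ℕ)):ℂ) by rw [Nat.cast_sub hk]; push_cast; ring,
      expneg (k-1) _ (hu m), div_eq_mul_inv, inv_inv, qcpow_add]
    ring
  have A1 := seriesA q hq0 hq1 f (by omega) χ (h - 1)
    (by simp only [Complex.sub_re, Complex.one_re]; linarith) k x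
  have A2 := seriesA q hq0 hq1 f (by omega) χ h (by linarith) (k-1) x
  refine ⟨A1.1.congr (fun m => (hpt1 m).symm),
    ((A2.1.mul_left (qcpow q ((x:ℝ):ℂ))).congr (fun m => (hpt2 m).symm)), ?_⟩
  have E1 : ∑' m : ℕ, qcpow q ((h-1) * (m:ℂ)) * χ (m : ZMod f) * ((qnumR q (x + m) : ℝ) : ℂ) ^ k
      = (1 - (q:ℂ))⁻¹ ^ k * ∑ l ∈ range (k+1),
          (k.choose l : ℂ) * (-1)^l * qcpow q ((l:ℂ) * x) *
            ((∑ a ∈ range f, χ (a : ZMod f) * qcpow q ((l:ℂ) + h - 1) ^ a) /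
              (1 - qcpow q ((l:ℂ) + h - 1) ^ f)) := by
    rw [A1.2]
    congr 1
    apply Finset.sum_congr rfl
    intro l _
    rw [show (l:ℂ) + (h - 1) = (l:ℂ) + h - 1 by ring]
  have E2 : ∑' m : ℕ, qcpow q (h * (m:ℂ)) * χ (m : ZMod f) * ((qnumR q (x + m) : ℝ) : ℂ) ^ (k-1)
      = (1 - (q:ℂ))⁻¹ ^ (k-1) * ∑ j ∈ range k,
          ((k-1).choose j : ℂ) * (-1)^j * qcpow q ((j:ℂ) * x) *
            ((∑ a ∈ range f, χ (a : ZMod f) * qcpow q (((j+1:ℕ):ℂ) + h - 1) ^ a) /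
              (1 - qcpow q (((j+1:ℕ):ℂ) + h - 1) ^ f)) := by
    rw [A2.2, show (k-1)+1 = k by omega]
    congr 1
    apply Finset.sum_congr rfl
    intro j _
    rw [show (j:ℂ) + h = ((j+1:ℕ):ℂ) + h - 1 by push_cast; ring]
  rw [hqLH, tsum_congr hpt1, E1, tsum_congr hpt2, tsum_mul_left, E2,
    beta_eval q hq0 hq1 h hh f hf χ k hk x]
  -- abbreviations
  set G : ℕ → ℂ := fun l => (∑ a ∈ range f, χ (a : ZMod f) * qcpow q ((l:ℂ) + h - 1) ^ a) /
    (1 - qcpow q ((l:ℂ) + h - 1) ^ f) with hG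
  have hsplit : ∑ l ∈ range (k+1), (k.choose l : ℂ) * (-1)^l * qcpow q ((l:ℂ)*x) *
        (((l:ℂ)+h-1) * G l)
      = (h-1) * ∑ l ∈ range (k+1), (k.choose l : ℂ) * (-1)^l * qcpow q ((l:ℂ)*x) * G l
        + ∑ l ∈ range (k+1), (k.choose l : ℂ) * (-1)^l * qcpow q ((l:ℂ)*x) * ((l:ℂ) * G l) := by
    rw [Finset.mul_sum, ← Finset.sum_add_distrib]
    apply Finset.sum_congr rfl
    intro l _
    ring
  have key' : qcpow q ((x:ℝ):ℂ) * (∑ j ∈ range k,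
        ((k-1).choose j : ℂ) * (-1)^j * qcpow q ((j:ℂ) * x) * ((∑ a ∈ range f, χ (a : ZMod f) * qcpow q (((j+1:ℕ):ℂ) + h - 1) ^ a) / (1 - qcpow q (((j+1:ℕ):ℂ) + h - 1) ^ f))) * (k:ℂ)
      = -∑ l ∈ range (k+1), (k.choose l : ℂ) * (-1)^l * qcpow q ((l:ℂ)*x) * ((l:ℂ) * G l) := by
    rw [Finset.sum_range_succ']
    simp only [Nat.cast_zero, zero_mul, mul_zero, add_zero, hG]
    rw [Finset.mul_sum, Finset.sum_mul, ← Finset.sum_neg_distrib]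
    apply Finset.sum_congr rfl
    intro j _
    have hqx : qcpow q ((x:ℝ):ℂ) * qcpow q ((j:ℂ)*x) = qcpow q ((((j:ℂ))+1)*x) := by
      rw [← qcpow_add]
      congr 1
      ring
    have hnat : k * (k-1).choose j = (j+1) * k.choose (j+1) := by
      have h1 := Nat.add_one_mul_choose_eq (k-1) j
      rw [show k-1+1 = k by omega] at h1
      exact h1.trans (Nat.mul_comm _ _)
    have hch : (k:ℂ) * ((k-1).choose j : ℂ) = ((j:ℂ)+1) * (k.choose (j+1) : ℂ) := by
      exact_mod_cast hnat
    push_cast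
    rw [pow_succ]
    linear_combination ((-1:ℂ)^j * ((∑ a ∈ range f, χ (a : ZMod f) * qcpow q ((j:ℂ) + 1 + h - 1) ^ a) / (1 - qcpow q ((j:ℂ) + 1 + h - 1) ^ f)) * (k:ℂ) * ((k-1).choose j : ℂ)) * hqx
      + ((-1:ℂ)^j * ((∑ a ∈ range f, χ (a : ZMod f) * qcpow q ((j:ℂ) + 1 + h - 1) ^ a) / (1 - qcpow q ((j:ℂ) + 1 + h - 1) ^ f)) * qcpow q (((j:ℂ)+1)*x)) * hch
  have hpow : (1 - (q:ℂ))⁻¹ ^ k = (1 - (q:ℂ))⁻¹ ^ (k-1) * (1 - (q:ℂ))⁻¹ := by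
    conv_lhs => rw [show k = (k-1)+1 by omega]
    rw [pow_succ]
  have hinv : (1 - (q:ℂ)) * (1 - (q:ℂ))⁻¹ = 1 := mul_inv_cancel₀ hqne
  rw [show ((1:ℂ) - (k:ℂ)) - 1 = -(k:ℂ) by ring, div_neg, hpow, hsplit]
  have hkinv : (k:ℂ) * ((k:ℂ))⁻¹ = 1 := mul_inv_cancel₀ hk0
  linear_combination (-(h-1) * (1 - (q:ℂ))⁻¹ ^ (k-1) *
      (∑ l ∈ range (k+1), (k.choose l : ℂ) * (-1)^l * qcpow q ((l:ℂ)*x) * G l) / (k:ℂ)) * hinv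
    + ((1 - (q:ℂ))⁻¹ ^ (k-1) / (k:ℂ)) * key'
    + (-((1 - (q:ℂ))⁻¹ ^ (k-1) * qcpow q ((x:ℝ):ℂ) * ∑ j ∈ range k,
        ((k-1).choose j : ℂ) * (-1)^j * qcpow q ((j:ℂ) * x) * ((∑ a ∈ range f, χ (a : ZMod f) * qcpow q (((j+1:ℕ):ℂ) + h - 1) ^ a) / (1 - qcpow q (((j+1:ℕ):ℂ) + h - 1) ^ f)))) * hkinv
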